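/- Let z₁, …, z_S be distinct complex numbers on the unit circle, h ∈ ℂ^S with all h_s ≠ 0, and y_m = ∑_{s=1}^S h_s z_s^{m-1} for m = 1, …, 2S. Define vectors y_k = (y_{k+1}, …, y_{k+S})ᵀ for k = 0, …, S-1 and the Hankel-type matrix 𝒲 = [y_{S-1}, …, y₀] ∈ ℂ^{S×S}. Then 𝒲 is nonsingular. -/

import Mathlib

/-- Nonsingularity of the Hankel-type matrix `𝒲 = [y_{S-1}, …, y₀]` built from
`2S` samples of an exponential sum with distinct unimodular bases and nonzero
gains. Column `j` of `𝒲` is the vector `y_{S-1-j} = (y_{S-j}, …, y_{2S-1-j})`. -/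
theorem hankel_matrix_nonsingular (S : ℕ) (z : Fin S → ℂ)
    (hz : Function.Injective z) (hcirc : ∀ s, ‖z s‖ = 1)
    (h : Fin S → ℂ) (hh : ∀ s, h s ≠ 0) (y : ℕ → ℂ)
    (hy : ∀ m : ℕ, 1 ≤ m → m ≤ 2 * S → y m = ∑ s, h s * z s ^ (m - 1)) :
    IsUnit (Matrix.of fun i j : Fin S => y ((S - 1 - (j : ℕ)) + (i : ℕ) + 1)) := by
  have hvd : (Matrix.vandermonde z).det ≠ 0 := by
    rw [Matrix.det_vandermonde]
    refine Finset.prod_ne_zero_iff.2 fun i _ => Finset.prod_ne_zero_iff.2 fun j hj => ?_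
    exact sub_ne_zero.2 fun e => (Finset.mem_Ioi.1 hj).ne' (hz e)
  have hEq : (Matrix.of fun i j : Fin S => y ((S - 1 - (j : ℕ)) + (i : ℕ) + 1))
      = (Matrix.vandermonde z).transpose * Matrix.diagonal h *
        ((Matrix.vandermonde z).submatrix id (Fin.revPerm : Equiv.Perm (Fin S))) := by
    ext i j
    have hiS : (i : ℕ) < S := i.2
    have hjS : (j : ℕ) < S := j.2
    simp only [Matrix.of_apply]
    rw [hy _ (by omega) (by omega)]
    simp only [Matrix.of_apply, Matrix.mul_apply, Matrix.diagonal_apply,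
      Matrix.transpose_apply, Matrix.submatrix_apply, id, Matrix.vandermonde_apply,
      Fin.revPerm_apply, Fin.val_rev]
    refine Finset.sum_congr rfl fun s _ => ?_
    rw [Finset.sum_eq_single s (by intro b _ hb; simp [hb]) (by simp)]
    simp only [eq_self_iff_true, if_true]
    rw [show (S - 1 - (j : ℕ) + (i : ℕ) + 1) - 1 = (i : ℕ) + (S - ((j : ℕ) + 1)) by omega,
      pow_add]
    ring
  rw [hEq, Matrix.isUnit_iff_isUnit_det, Matrix.det_mul, Matrix.det_mul,
    Matrix.det_transpose, Matrix.det_diagonal]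
  have hQ : ((Matrix.vandermonde z).submatrix id (Fin.revPerm : Equiv.Perm (Fin S))).det ≠ 0 := by
    rw [Matrix.det_permute']
    refine mul_ne_zero ?_ hvd
    exact_mod_cast Units.ne_zero _
  exact (mul_ne_zero (mul_ne_zero hvd (Finset.prod_ne_zero_iff.2 fun s _ => hh s)) hQ).isUnit
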